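/- arXiv:1807.01212 — 5 statements merged into one kernel-verified Lean document; each statement's English description precedes it below -/
import Mathlib

section
/- Let (Ω, F, P) be a probability space, (S, δ) a separable metric space, U : S × Ω → ℝ a continuous random field, Y : Ω → S a random variable independent of U with ∫_S E[|U(s)|] (Y(P))(ds) < ∞. Then ω ↦ U(Y(ω), ω) is measurable and integrable, and E[U(Y)] = ∫_S 1_{E[|U(s)|]<∞}(s) · E[U(s)] (Y(P))(ds). -/
open MeasureTheory ProbabilityTheory
open scoped NNReal ENNReal

/-- The σ-algebra on `Ω` generated by a family of functions `f i : Ω → β`. -/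
def sigmaGen {Ω ι β : Type*} [MeasurableSpace β] (f : ι → Ω → β) : MeasurableSpace Ω :=
  ⨆ i, MeasurableSpace.comap (f i) inferInstance

/-- Auxiliary Fubini-type lemma. -/
lemma crf_aux {Ω Ω' S : Type*} [MeasurableSpace S] [MeasurableSpace Ω] [MeasurableSpace Ω']
    (P : Measure Ω) [IsProbabilityMeasure P] (μ : Measure S) [IsProbabilityMeasure μ]
    (Y : Ω → S) (hY : Measurable Y) (j : Ω → Ω') (hj : Measurable j)
    (F : S × Ω' → ℝ) (hF : Measurable F)
    (hmap : P.map (fun ω => (Y ω, j ω)) = μ.prod (P.map j))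
    (hfin : ∫⁻ s, ∫⁻ ω, ENNReal.ofReal |F (s, j ω)| ∂P ∂μ < ⊤) :
    Integrable (fun ω => F (Y ω, j ω)) P ∧
      ∫ ω, F (Y ω, j ω) ∂P = ∫ s, ∫ ω, F (s, j ω) ∂P ∂μ := by
  haveI : IsProbabilityMeasure (P.map j) := Measure.isProbabilityMeasure_map hj.aemeasurable
  have hpair : Measurable (fun ω => (Y ω, j ω)) := hY.prodMk hj
  have key : ∀ (g : S × Ω' → ℝ≥0∞), Measurable g →
      ∫⁻ ω, g (Y ω, j ω) ∂P = ∫⁻ s, ∫⁻ ω, g (s, j ω) ∂P ∂μ := by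
    intro g hg
    rw [← lintegral_map hg hpair, hmap, lintegral_prod _ hg.aemeasurable]
    refine lintegral_congr fun s => ?_
    rw [lintegral_map (f := fun ω' => g (s, ω')) (hg.comp measurable_prodMk_left) hj]
  have habs : Measurable (fun p => ENNReal.ofReal |F p|) :=
    ENNReal.measurable_ofReal.comp (measurable_abs.comp hF)
  have hfin' : ∫⁻ ω, ENNReal.ofReal |F (Y ω, j ω)| ∂P < ⊤ := by
    rw [key _ habs]; exact hfin
  have hInt1 : Integrable (fun ω => F (Y ω, j ω)) P := by
    refine ⟨(hF.comp hpair).aestronglyMeasurable, ?_⟩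
    simpa [HasFiniteIntegral, ← ofReal_norm, Real.norm_eq_abs] using hfin'
  have hIntF : Integrable F (μ.prod (P.map j)) := by
    refine ⟨hF.aestronglyMeasurable, ?_⟩
    rw [HasFiniteIntegral]
    calc ∫⁻ z, ‖F z‖₊ ∂(μ.prod (P.map j))
        = ∫⁻ z, ENNReal.ofReal |F z| ∂(μ.prod (P.map j)) := by
          simp [← enorm_eq_nnnorm, ← ofReal_norm, Real.norm_eq_abs]
      _ = ∫⁻ s, ∫⁻ ω', ENNReal.ofReal |F (s, ω')| ∂(P.map j) ∂μ :=
          lintegral_prod _ habs.aemeasurable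
      _ = ∫⁻ s, ∫⁻ ω, ENNReal.ofReal |F (s, j ω)| ∂P ∂μ := by
          refine lintegral_congr fun s => ?_
          rw [lintegral_map (f := fun ω' => ENNReal.ofReal |F (s, ω')|) (habs.comp measurable_prodMk_left) hj]
      _ < ⊤ := hfin
  refine ⟨hInt1, ?_⟩
  calc ∫ ω, F (Y ω, j ω) ∂P
      = ∫ z, F z ∂(P.map (fun ω => (Y ω, j ω))) := by
        rw [integral_map hpair.aemeasurable hF.aestronglyMeasurable]
    _ = ∫ z, F z ∂(μ.prod (P.map j)) := by rw [hmap]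
    _ = ∫ s, ∫ ω', F (s, ω') ∂(P.map j) ∂μ := integral_prod F hIntF
    _ = ∫ s, ∫ ω, F (s, j ω) ∂P ∂μ := by
        refine integral_congr_ae (Filter.Eventually.of_forall fun s => ?_)
        simp only []
        rw [integral_map (f := fun ω' => F (s, ω')) hj.aemeasurable
          ((hF.comp measurable_prodMk_left).aestronglyMeasurable)]

/-- If `U : S × Ω → ℝ` is a continuous random field on a separable metric space `S`,
`Y : Ω → S` is a random variable independent of `U`, and `∫_S E[|U(s)|] d(Y(P))(s) < ∞`,
then `ω ↦ U (Y ω) ω` is measurable and integrable, and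
`E[U(Y)] = ∫_S 1_{E[|U(s)|] < ∞}(s) E[U(s)] d(Y(P))(s)`. -/
theorem cont_random_field_eval_integrable
    {Ω S : Type*} [mΩ : MeasurableSpace Ω] [MetricSpace S]
    [TopologicalSpace.SeparableSpace S] [MeasurableSpace S] [BorelSpace S]
    (P : Measure Ω) [IsProbabilityMeasure P]
    (U : S → Ω → ℝ)
    (hUcont : ∀ ω, Continuous (fun s => U s ω))
    (hUmeas : ∀ s, Measurable (U s))
    (Y : Ω → S) (hY : Measurable Y)
    (hind : Indep (sigmaGen U) (MeasurableSpace.comap Y inferInstance) P)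
    (hint : ∫⁻ s, (∫⁻ ω, ENNReal.ofReal |U s ω| ∂P) ∂(P.map Y) < ⊤) :
    Measurable (fun ω => U (Y ω) ω) ∧ Integrable (fun ω => U (Y ω) ω) P ∧
      ∫ ω, U (Y ω) ω ∂P
        = ∫ s, Set.indicator {s' : S | Integrable (U s') P} (fun s' => ∫ ω, U s' ω ∂P) s
            ∂(P.map Y) := by
  haveI : SecondCountableTopology S := UniformSpace.secondCountable_of_separable S
  haveI : IsProbabilityMeasure (P.map Y) := Measure.isProbabilityMeasure_map hY.aemeasurable
  have hm' : sigmaGen U ≤ mΩ := iSup_le fun s => (hUmeas s).comap_le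
  have hUm' : ∀ s, @Measurable Ω ℝ (sigmaGen U) _ (U s) := fun s =>
    Measurable.mono (comap_measurable (U s))
      (le_iSup (fun i => MeasurableSpace.comap (U i) inferInstance) s) le_rfl
  have hF : Measurable (Function.uncurry U) :=
    measurable_uncurry_of_continuous_of_measurable hUcont hUmeas
  have hFm' : @Measurable (S × Ω) ℝ (@Prod.instMeasurableSpace S Ω _ (sigmaGen U)) _
      (Function.uncurry U) :=
    @measurable_uncurry_of_continuous_of_measurable Ω ℝ S _ _ _ _ _ _ _ _ _ (sigmaGen U) U
      hUcont hUm'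
  have hmeas : Measurable (fun ω => U (Y ω) ω) := hF.comp (hY.prodMk measurable_id)
  have hid : @Measurable Ω Ω mΩ (sigmaGen U) id := (@measurable_id Ω (sigmaGen U)).mono hm' le_rfl
  -- independence gives the product structure of the law of the pair
  have hIF : @IndepFun Ω S Ω mΩ _ (sigmaGen U) Y id P := by
    unfold IndepFun Kernel.IndepFun
    rw [MeasurableSpace.comap_id]
    exact hind.symm
  have hprod := (@indepFun_iff_map_prod_eq_prod_map_map Ω S Ω mΩ P Y id _ (sigmaGen U) _
    hY.aemeasurable (@Measurable.aemeasurable Ω Ω mΩ (sigmaGen U) id P hid)).mp hIF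
  have haux := @crf_aux Ω Ω S _ mΩ (sigmaGen U) P _ (P.map Y) _ Y hY id hid
    (Function.uncurry U) hFm' hprod (by simpa using hint)
  simp only [Function.uncurry_apply_pair, id_eq] at haux
  refine ⟨hmeas, haux.1, ?_⟩
  rw [haux.2]
  -- a.e. integrability of the slices
  have hslice : Measurable (fun s => ∫⁻ ω, ENNReal.ofReal |U s ω| ∂P) := by
    have : Measurable (fun p : S × Ω => ENNReal.ofReal |Function.uncurry U p|) :=
      ENNReal.measurable_ofReal.comp (measurable_abs.comp hF)
    exact this.lintegral_prod_right'
  have hae : ∀ᵐ s ∂(P.map Y), ∫⁻ ω, ENNReal.ofReal |U s ω| ∂P < ⊤ :=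
    ae_lt_top hslice hint.ne
  refine integral_congr_ae ?_
  filter_upwards [hae] with s hs
  have hIs : Integrable (U s) P := by
    refine ⟨(hUmeas s).aestronglyMeasurable, ?_⟩
    simpa [HasFiniteIntegral, ← ofReal_norm, Real.norm_eq_abs] using hs
  rw [Set.indicator_of_mem (by exact hIs)]
end

section
/- Let (Ω, F, P) be a probability space, (S, δ) a separable metric space, (E, ℰ) a measurable space, U₁, U₂ : S × Ω → ℝ continuous random fields, Y₁, Y₂ : E × Ω → S random fields such that for i ∈ {1,2}, Uᵢ and Yᵢ are independent, U₁ and U₂ are identically distributed, and Y₁ and Y₂ are identically distributed. Then the random fields (e,ω) ↦ U₁(Y₁(e,ω), ω) and (e,ω) ↦ U₂(Y₂(e,ω), ω) are identically distributed. -/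
open MeasureTheory ProbabilityTheory
open scoped NNReal ENNReal

/-- Two random fields indexed by `ι` with values in `β` are identically distributed if all
their finite-dimensional distributions agree. -/
def IdentDistribField {Ω ι β : Type*} [MeasurableSpace Ω] [MeasurableSpace β]
    (P : Measure Ω) (X₁ X₂ : ι → Ω → β) : Prop :=
  ∀ (n : ℕ) (a : Fin n → ι),
    P.map (fun ω => fun i => X₁ (a i) ω) = P.map (fun ω => fun i => X₂ (a i) ω)

section Aux

variable {Ω S E : Type*} [mΩ : MeasurableSpace Ω] [MetricSpace S]
    [TopologicalSpace.SeparableSpace S] [MeasurableSpace S] [BorelSpace S]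

/-- Auxiliary: one-sided computation of the law of the approximated composition. -/
lemma aux_map_eq (P : Measure Ω) [IsProbabilityMeasure P]
    (U : S → Ω → ℝ) (Y : E → Ω → S)
    (hUmeas : ∀ s, Measurable (U s)) (hYmeas : ∀ e, Measurable (Y e))
    (hind : Indep (sigmaGen U) (sigmaGen Y) P)
    {n : ℕ} (a : Fin n → E) (e : ℕ → S) (N : ℕ)
    (A : (Fin (N + 1) → ℝ) × (Fin n → S) → Fin n → ℝ)
    (hA : Measurable A) :
    P.map (fun ω => A (fun k : Fin (N + 1) => U (e k) ω, fun i => Y (a i) ω)) =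
      ((P.map (fun ω => fun k : Fin (N + 1) => U (e k) ω)).prod
        (P.map (fun ω => fun i => Y (a i) ω))).map A := by
  have hX : Measurable (fun ω => fun k : Fin (N + 1) => U (e k) ω) :=
    measurable_pi_lambda _ fun k => hUmeas _
  have hZ : Measurable (fun ω => fun i => Y (a i) ω) :=
    measurable_pi_lambda _ fun i => hYmeas _
  have hXm : @Measurable Ω (Fin (N + 1) → ℝ) (sigmaGen U) _
      (fun ω => fun k : Fin (N + 1) => U (e k) ω) := by
    rw [@measurable_pi_iff _ _ _ (sigmaGen U)]
    exact fun k =>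
      Measurable.of_comap_le (le_iSup (fun s => MeasurableSpace.comap (U s) inferInstance) (e k))
  have hZm : @Measurable Ω (Fin n → S) (sigmaGen Y) _ (fun ω => fun i => Y (a i) ω) := by
    rw [@measurable_pi_iff _ _ _ (sigmaGen Y)]
    exact fun i =>
      Measurable.of_comap_le (le_iSup (fun s => MeasurableSpace.comap (Y s) inferInstance) (a i))
  have hIF : IndepFun (fun ω => fun k : Fin (N + 1) => U (e k) ω)
      (fun ω => fun i => Y (a i) ω) P :=
    indep_of_indep_of_le_right (indep_of_indep_of_le_left hind hXm.comap_le) hZm.comap_le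
  have hprod := (indepFun_iff_map_prod_eq_prod_map_map hX.aemeasurable hZ.aemeasurable).mp hIF
  rw [← hprod, Measure.map_map hA (hX.prodMk hZ)]
  rfl

end Aux

/-- If `U₁, U₂ : S × Ω → ℝ` are continuous random fields, `Y₁, Y₂ : E × Ω → S` are random
fields, `Uᵢ` and `Yᵢ` are independent, `U₁` and `U₂` are identically distributed, and `Y₁` and
`Y₂` are identically distributed, then the random fields `(e, ω) ↦ Uᵢ(Yᵢ(e, ω), ω)`, `i = 1, 2`,
are identically distributed. -/
theorem ident_distrib_composition
    {Ω S E : Type*} [mΩ : MeasurableSpace Ω] [MetricSpace S]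
    [TopologicalSpace.SeparableSpace S] [MeasurableSpace S] [BorelSpace S]
    (P : Measure Ω) [IsProbabilityMeasure P]
    (U₁ U₂ : S → Ω → ℝ) (Y₁ Y₂ : E → Ω → S)
    (hU₁cont : ∀ ω, Continuous (fun s => U₁ s ω))
    (hU₂cont : ∀ ω, Continuous (fun s => U₂ s ω))
    (hU₁meas : ∀ s, Measurable (U₁ s)) (hU₂meas : ∀ s, Measurable (U₂ s))
    (hY₁meas : ∀ e, Measurable (Y₁ e)) (hY₂meas : ∀ e, Measurable (Y₂ e))
    (hind₁ : Indep (sigmaGen U₁) (sigmaGen Y₁) P)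
    (hind₂ : Indep (sigmaGen U₂) (sigmaGen Y₂) P)
    (hU : IdentDistribField P U₁ U₂)
    (hY : IdentDistribField P Y₁ Y₂) :
    IdentDistribField P (fun e ω => U₁ (Y₁ e ω) ω) (fun e ω => U₂ (Y₂ e ω) ω) := by
  intro n a
  -- trivial case `n = 0`
  rcases Nat.eq_zero_or_pos n with hn | hn
  · subst hn
    congr 1
    funext ω
    exact funext fun i => i.elim0
  -- `Ω` is nonempty since `P` is a probability measure, hence `S` is nonempty
  have hΩ : Nonempty Ω := by
    by_contra h
    rw [not_nonempty_iff] at h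
    have : P Set.univ = 1 := measure_univ
    rw [Set.univ_eq_empty_iff.mpr h, measure_empty] at this
    exact zero_ne_one this
  have hS : Nonempty S := ⟨Y₁ (a ⟨0, hn⟩) hΩ.some⟩
  -- dense sequence in `S`
  set e : ℕ → S := TopologicalSpace.denseSeq S with he
  have hdense : DenseRange e := TopologicalSpace.denseRange_denseSeq S
  -- the approximation maps
  have hindlt : ∀ (N : ℕ) (s : S),
      min (SimpleFunc.nearestPtInd e N s) N < N + 1 := fun N s => by omega
  have hindmeas : ∀ N : ℕ, Measurable (fun s : S =>
      (⟨min (SimpleFunc.nearestPtInd e N s) N, hindlt N s⟩ : Fin (N + 1))) := by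
    intro N
    apply measurable_to_countable'
    intro x
    have : (fun s : S => (⟨min (SimpleFunc.nearestPtInd e N s) N, hindlt N s⟩ : Fin (N + 1)))
        ⁻¹' {x} = (fun s : S => min (SimpleFunc.nearestPtInd e N s) N) ⁻¹' {(x : ℕ)} := by
      ext s
      simp [Fin.ext_iff]
    rw [this]
    exact ((SimpleFunc.nearestPtInd e N).measurable.min measurable_const)
      (measurableSet_singleton _)
  set A : (N : ℕ) → ((Fin (N + 1) → ℝ) × (Fin n → S) → Fin n → ℝ) := fun N p i =>
    p.1 ⟨min (SimpleFunc.nearestPtInd e N (p.2 i)) N, hindlt N _⟩ with hA_def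
  have hA : ∀ N, Measurable (A N) := by
    intro N
    apply measurable_pi_lambda
    intro i
    have heval : Measurable (fun q : (Fin (N + 1) → ℝ) × Fin (N + 1) => q.1 q.2) :=
      measurable_from_prod_countable_left fun k => measurable_pi_apply k
    exact heval.comp (measurable_fst.prodMk
      ((hindmeas N).comp ((measurable_pi_apply i).comp measurable_snd)))
  -- the approximated compositions
  set G₁ : ℕ → Ω → Fin n → ℝ := fun N ω =>
    A N (fun k : Fin (N + 1) => U₁ (e k) ω, fun i => Y₁ (a i) ω) with hG₁_def
  set G₂ : ℕ → Ω → Fin n → ℝ := fun N ω =>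
    A N (fun k : Fin (N + 1) => U₂ (e k) ω, fun i => Y₂ (a i) ω) with hG₂_def
  -- their laws coincide
  have hmapsEq : ∀ N, P.map (G₁ N) = P.map (G₂ N) := by
    intro N
    rw [hG₁_def, hG₂_def]
    rw [aux_map_eq P U₁ Y₁ hU₁meas hY₁meas hind₁ a e N (A N) (hA N),
      aux_map_eq P U₂ Y₂ hU₂meas hY₂meas hind₂ a e N (A N) (hA N),
      hU (N + 1) (fun k => e k), hY n a]
  -- measurability of the approximations and of the limits
  have hX₁ : ∀ N, Measurable (fun ω => fun k : Fin (N + 1) => U₁ (e k) ω) := fun N =>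
    measurable_pi_lambda _ fun k => hU₁meas _
  have hX₂ : ∀ N, Measurable (fun ω => fun k : Fin (N + 1) => U₂ (e k) ω) := fun N =>
    measurable_pi_lambda _ fun k => hU₂meas _
  have hZ₁ : Measurable (fun ω => fun i => Y₁ (a i) ω) :=
    measurable_pi_lambda _ fun i => hY₁meas _
  have hZ₂ : Measurable (fun ω => fun i => Y₂ (a i) ω) :=
    measurable_pi_lambda _ fun i => hY₂meas _
  have hG₁meas : ∀ N, Measurable (G₁ N) := fun N => (hA N).comp ((hX₁ N).prodMk hZ₁)
  have hG₂meas : ∀ N, Measurable (G₂ N) := fun N => (hA N).comp ((hX₂ N).prodMk hZ₂)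
  -- identification with nearest-point approximations, and pointwise convergence
  have hnearest : ∀ (N : ℕ) (s : S),
      e (min (SimpleFunc.nearestPtInd e N s) N) = SimpleFunc.nearestPt e N s := by
    intro N s
    rw [min_eq_left (SimpleFunc.nearestPtInd_le e N s)]
    simp [SimpleFunc.nearestPt]
  have htendsto₁ : ∀ ω, Filter.Tendsto (fun N => G₁ N ω) Filter.atTop
      (nhds (fun i => U₁ (Y₁ (a i) ω) ω)) := by
    intro ω
    rw [tendsto_pi_nhds]
    intro i
    have : (fun N => G₁ N ω i) =
        fun N => U₁ (SimpleFunc.nearestPt e N (Y₁ (a i) ω)) ω := by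
      funext N
      simp only [hG₁_def, hA_def]
      rw [hnearest]
    rw [this]
    exact ((hU₁cont ω).tendsto _).comp
      (SimpleFunc.tendsto_nearestPt (hdense (Y₁ (a i) ω)))
  have htendsto₂ : ∀ ω, Filter.Tendsto (fun N => G₂ N ω) Filter.atTop
      (nhds (fun i => U₂ (Y₂ (a i) ω) ω)) := by
    intro ω
    rw [tendsto_pi_nhds]
    intro i
    have : (fun N => G₂ N ω i) =
        fun N => U₂ (SimpleFunc.nearestPt e N (Y₂ (a i) ω)) ω := by
      funext N
      simp only [hG₂_def, hA_def]
      rw [hnearest]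
    rw [this]
    exact ((hU₂cont ω).tendsto _).comp
      (SimpleFunc.tendsto_nearestPt (hdense (Y₂ (a i) ω)))
  have hg₁meas : Measurable (fun ω => fun i => U₁ (Y₁ (a i) ω) ω) :=
    measurable_of_tendsto_metrizable hG₁meas (tendsto_pi_nhds.mpr fun ω => htendsto₁ ω)
  have hg₂meas : Measurable (fun ω => fun i => U₂ (Y₂ (a i) ω) ω) :=
    measurable_of_tendsto_metrizable hG₂meas (tendsto_pi_nhds.mpr fun ω => htendsto₂ ω)
  -- conclude via bounded continuous test functions
  haveI : IsProbabilityMeasure (P.map (fun ω => fun i => U₁ (Y₁ (a i) ω) ω)) :=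
    Measure.isProbabilityMeasure_map hg₁meas.aemeasurable
  apply ext_of_forall_lintegral_eq_of_IsFiniteMeasure
  intro f
  have hfm : Measurable (fun x : Fin n → ℝ => (f x : ℝ≥0∞)) :=
    measurable_coe_nnreal_ennreal.comp f.continuous.measurable
  rw [lintegral_map hfm hg₁meas, lintegral_map hfm hg₂meas]
  obtain ⟨C, hC⟩ : ∃ C : ℝ≥0, ∀ x, f x ≤ C := by
    obtain ⟨D, hD⟩ := f.bounded
    refine ⟨f (fun _ => 0) + D.toNNReal, fun x => ?_⟩
    calc f x ≤ f (fun _ => 0) + nndist (f x) (f (fun _ => 0)) :=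
          NNReal.le_add_nndist _ _
      _ ≤ f (fun _ => 0) + D.toNNReal := by
          gcongr
          rw [← NNReal.coe_le_coe, coe_nndist, Real.coe_toNNReal _
            ((dist_nonneg).trans (hD x (fun _ => 0)))]
          exact hD x _
  have key : ∀ N, ∫⁻ ω, (f (G₁ N ω) : ℝ≥0∞) ∂P = ∫⁻ ω, (f (G₂ N ω) : ℝ≥0∞) ∂P := by
    intro N
    rw [← lintegral_map hfm (hG₁meas N), ← lintegral_map hfm (hG₂meas N), hmapsEq N]
  have hlim₁ : Filter.Tendsto (fun N => ∫⁻ ω, (f (G₁ N ω) : ℝ≥0∞) ∂P) Filter.atTop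
      (nhds (∫⁻ ω, (f ((fun i => U₁ (Y₁ (a i) ω) ω)) : ℝ≥0∞) ∂P)) := by
    apply tendsto_lintegral_of_dominated_convergence (fun _ => (C : ℝ≥0∞))
    · exact fun N => hfm.comp (hG₁meas N)
    · intro N
      filter_upwards with ω
      exact ENNReal.coe_le_coe.mpr (hC _)
    · rw [lintegral_const]
      exact ENNReal.mul_ne_top ENNReal.coe_ne_top (measure_ne_top P _)
    · filter_upwards with ω
      exact ENNReal.tendsto_coe.mpr ((f.continuous.tendsto _).comp (htendsto₁ ω))
  have hlim₂ : Filter.Tendsto (fun N => ∫⁻ ω, (f (G₂ N ω) : ℝ≥0∞) ∂P) Filter.atTop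
      (nhds (∫⁻ ω, (f ((fun i => U₂ (Y₂ (a i) ω) ω)) : ℝ≥0∞) ∂P)) := by
    apply tendsto_lintegral_of_dominated_convergence (fun _ => (C : ℝ≥0∞))
    · exact fun N => hfm.comp (hG₂meas N)
    · intro N
      filter_upwards with ω
      exact ENNReal.coe_le_coe.mpr (hC _)
    · rw [lintegral_const]
      exact ENNReal.mul_ne_top ENNReal.coe_ne_top (measure_ne_top P _)
    · filter_upwards with ω
      exact ENNReal.tendsto_coe.mpr ((f.continuous.tendsto _).comp (htendsto₂ ω))
  simp_rw [key] at hlim₁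
  exact tendsto_nhds_unique hlim₁ hlim₂
end

section
/- Let d ∈ ℕ, T ∈ (0,∞), ξ ∈ ℝ^d, let W : [0,T] × Ω → ℝ^d be a standard Brownian motion, let k ∈ ℕ₀, n ∈ ℕ, r₁,…,rₙ ∈ ℝ, let U₁,…,Uₙ : [0,T] × ℝ^d × Ω → ℝ be continuous i.i.d. random fields independent of W with E[|U₁(t,x)|] < ∞ for all t, x. Then, with the semi-norms ‖·‖ₖ defined by ‖V‖₀² = E[|V(0,ξ)|²] and ‖V‖ₖ² = (1/Tᵏ)∫₀ᵀ (t^{k-1}/(k-1)!) E[|V(t,ξ+W_t)|²] dt for k ≥ 1, it holds that ‖Σᵢ rᵢ(Uᵢ − E[Uᵢ])‖ₖ = ‖U₁ − E[U₁]‖ₖ · (Σᵢ |rᵢ|²)^{1/2} ≤ ‖U₁‖ₖ · (Σᵢ |rᵢ|²)^{1/2}. -/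
open MeasureTheory ProbabilityTheory
open scoped NNReal ENNReal

/-- `W` is a standard `d`-dimensional Brownian motion on `[0, T]` (with continuous sample
paths): it starts at `0`, has continuous paths, measurable evaluations, independent
increments, and its increments have independent coordinates, each one centered Gaussian with
variance given by the length of the time increment. -/
def IsStandardBM {Ω : Type*} [MeasurableSpace Ω] (P : Measure Ω) {d : ℕ} (T : ℝ)
    (W : ℝ → Ω → EuclideanSpace ℝ (Fin d)) : Prop :=
  (∀ ω, W 0 ω = 0) ∧
  (∀ ω, Continuous (fun t => W t ω)) ∧
  (∀ t, Measurable (W t)) ∧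
  (∀ (n : ℕ) (t : ℕ → ℝ), Monotone t →
    iIndepFun
      (fun (i : Fin n) ω => W (t (i + 1)) ω - W (t i) ω) P) ∧
  (∀ s t : ℝ, 0 ≤ s → s ≤ t → t ≤ T →
    (iIndepFun
        (fun (i : Fin d) ω => (W t ω - W s ω) i) P ∧
      ∀ i : Fin d, P.map (fun ω => (W t ω - W s ω) i)
        = gaussianReal 0 (Real.toNNReal (t - s))))

/-- The squared semi-norm `‖V‖ₖ²`: for `k = 0` it is `E[|V(0, ξ)|²]`, and for `k ≥ 1` it is
`(1/Tᵏ) ∫₀ᵀ t^(k-1)/(k-1)! E[|V(t, ξ + W_t)|²] dt`. -/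
noncomputable def mlpSeminormSq {Ω : Type*} [MeasurableSpace Ω] (P : Measure Ω) {d : ℕ}
    (W : ℝ → Ω → EuclideanSpace ℝ (Fin d)) (ξ : EuclideanSpace ℝ (Fin d)) (T : ℝ) (k : ℕ)
    (V : ℝ → EuclideanSpace ℝ (Fin d) → Ω → ℝ) : ℝ≥0∞ :=
  match k with
  | 0 => ∫⁻ ω, ENNReal.ofReal (|V 0 ξ ω| ^ 2) ∂P
  | Nat.succ j =>
      ENNReal.ofReal (1 / T ^ (j + 1)) *
        ∫⁻ t in Set.Icc (0 : ℝ) T,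
          (ENNReal.ofReal (t ^ j / (Nat.factorial j)) *
            ∫⁻ ω, ENNReal.ofReal (|V t (ξ + W t ω) ω| ^ 2) ∂P)

/-- The semi-norm `‖V‖ₖ`. -/
noncomputable def mlpSeminorm {Ω : Type*} [MeasurableSpace Ω] (P : Measure Ω) {d : ℕ}
    (W : ℝ → Ω → EuclideanSpace ℝ (Fin d)) (ξ : EuclideanSpace ℝ (Fin d)) (T : ℝ) (k : ℕ)
    (V : ℝ → EuclideanSpace ℝ (Fin d) → Ω → ℝ) : ℝ≥0∞ :=
  (mlpSeminormSq P W ξ T k V) ^ (1 / 2 : ℝ)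

section Helpers

variable {Ω : Type*} [mΩ : MeasurableSpace Ω] {P : Measure Ω}


variable {Ω : Type*} [mΩ : MeasurableSpace Ω] {P : Measure Ω}

lemma ofReal_abs_sq_eq_nnnorm (a : ℝ) :
    ENNReal.ofReal (|a| ^ 2) = (‖a‖₊ : ℝ≥0∞) ^ 2 := by
  rw [ENNReal.ofReal_pow (abs_nonneg a), ← Real.enorm_eq_ofReal_abs, enorm_eq_nnnorm]

lemma memℒp_two_of_indepFun_add [IsProbabilityMeasure P]
    {Y Z : Ω → ℝ} (hY : Measurable Y) (hZ : Measurable Z) (hind : IndepFun Y Z P)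
    (hsum : MemLp (fun ω => Y ω + Z ω) 2 P) : MemLp Z 2 P := by
  have hjoint : P.map (fun ω => (Y ω, Z ω)) = (P.map Y).prod (P.map Z) :=
    (indepFun_iff_map_prod_eq_prod_map_map hY.aemeasurable hZ.aemeasurable).1 hind
  haveI : IsProbabilityMeasure (P.map Y) := Measure.isProbabilityMeasure_map hY.aemeasurable
  haveI : IsProbabilityMeasure (P.map Z) := Measure.isProbabilityMeasure_map hZ.aemeasurable
  have hfin : (∫⁻ ω, ENNReal.ofReal ((Y ω + Z ω) ^ 2) ∂P) < ⊤ := by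
    have h1 : Integrable (fun ω => (Y ω + Z ω) ^ 2) P := hsum.integrable_sq
    have h2 : (∫⁻ ω, (‖(Y ω + Z ω) ^ 2‖₊ : ℝ≥0∞) ∂P) < ⊤ := h1.hasFiniteIntegral
    refine lt_of_eq_of_lt ?_ h2
    refine lintegral_congr fun ω => ?_
    rw [← enorm_eq_nnnorm, Real.enorm_eq_ofReal_abs, abs_of_nonneg (sq_nonneg _)]
  have hmeasP : Measurable fun p : ℝ × ℝ => ENNReal.ofReal ((p.1 + p.2) ^ 2) :=
    ((measurable_fst.add measurable_snd).pow_const 2).ennreal_ofReal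
  have hfin2 : (∫⁻ y, ∫⁻ z, ENNReal.ofReal ((y + z) ^ 2) ∂(P.map Z) ∂(P.map Y)) < ⊤ := by
    rw [← lintegral_prod _ hmeasP.aemeasurable, ← hjoint,
      lintegral_map hmeasP (hY.prodMk hZ)]
    exact hfin
  have hae : ∀ᵐ y ∂(P.map Y), (∫⁻ z, ENNReal.ofReal ((y + z) ^ 2) ∂(P.map Z)) < ⊤ :=
    ae_lt_top (Measurable.lintegral_prod_right
      (f := fun y z => ENNReal.ofReal ((y + z) ^ 2)) hmeasP) hfin2.ne
  have hne : (P.map Y) ≠ 0 := IsProbabilityMeasure.ne_zero _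
  haveI : (ae (P.map Y)).NeBot := ae_neBot.2 hne
  obtain ⟨y₀, hy₀⟩ := hae.exists
  have hfin3 : (∫⁻ ω, ENNReal.ofReal ((y₀ + Z ω) ^ 2) ∂P) < ⊤ := by
    rwa [lintegral_map (((measurable_id'.const_add y₀).pow_const 2).ennreal_ofReal) hZ] at hy₀
  have hmem : MemLp (fun ω => y₀ + Z ω) 2 P := by
    rw [memLp_two_iff_integrable_sq (f := fun ω => y₀ + Z ω) ((measurable_const.add hZ).aestronglyMeasurable)]
    refine ⟨((measurable_const.add hZ).pow_const 2).aestronglyMeasurable, ?_⟩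
    refine lt_of_eq_of_lt ?_ hfin3
    exact lintegral_congr fun ω => by
      rw [Real.enorm_eq_ofReal_abs, abs_of_nonneg (sq_nonneg (y₀ + Z ω))]
  have heq : (fun ω => (y₀ + Z ω) - y₀) = Z := by funext ω; ring
  have h := hmem.sub (memLp_const (E := ℝ) y₀)
  rw [show ((fun ω => y₀ + Z ω) - fun _ => y₀) = Z from by funext ω; simp] at h
  exact h


variable {Ω : Type*} [mΩ : MeasurableSpace Ω] {P : Measure Ω}

lemma lintegral_sq_centered_le [IsProbabilityMeasure P] (V : Ω → ℝ) (hV : Measurable V) :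
    (∫⁻ ω, ENNReal.ofReal (|V ω - ∫ ω', V ω' ∂P| ^ 2) ∂P)
      ≤ ∫⁻ ω, ENNReal.ofReal (|V ω| ^ 2) ∂P := by
  have hL : (∫⁻ ω, ENNReal.ofReal (|V ω - ∫ ω', V ω' ∂P| ^ 2) ∂P) = evariance V P := by
    rw [evariance_eq_lintegral_ofReal]; exact lintegral_congr fun ω => by rw [sq_abs]
  have hR : (∫⁻ ω, ENNReal.ofReal (|V ω| ^ 2) ∂P) = ∫⁻ ω, (‖V ω‖₊ : ℝ≥0∞) ^ 2 ∂P :=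
    lintegral_congr fun ω => ofReal_abs_sq_eq_nnnorm _
  rw [hL, hR, evariance_def' hV.aestronglyMeasurable]
  exact tsub_le_self

lemma lintegral_sq_sum_centered [IsProbabilityMeasure P] {n : ℕ} (r : Fin n → ℝ)
    (V : Fin n → Ω → ℝ) (i0 : Fin n)
    (hmeas : ∀ i, Measurable (V i))
    (hindep : iIndepFun V P)
    (hid : ∀ i, P.map (V i) = P.map (V i0))
    (hint : Integrable (V i0) P) :
    (∫⁻ ω, ENNReal.ofReal (|∑ i, r i * (V i ω - ∫ ω', V i ω' ∂P)| ^ 2) ∂P)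
      = ENNReal.ofReal (∑ i, |r i| ^ 2) *
        ∫⁻ ω, ENNReal.ofReal (|V i0 ω - ∫ ω', V i0 ω' ∂P| ^ 2) ∂P := by
  classical
  have hidd : ∀ i, IdentDistrib (V i) (V i0) P P :=
    fun i => ⟨(hmeas i).aemeasurable, (hmeas i0).aemeasurable, hid i⟩
  have hinti : ∀ i, Integrable (V i) P := fun i => ((hidd i).integrable_iff).2 hint
  have hmean : ∀ i, ∫ ω', V i ω' ∂P = ∫ ω', V i0 ω' ∂P := fun i => (hidd i).integral_eq
  set m0 : ℝ := ∫ ω', V i0 ω' ∂P with hm0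
  set S : Ω → ℝ := fun ω => ∑ i, r i * V i ω with hSdef
  have hSsum : S = ∑ i : Fin n, (fun ω => r i * V i ω) := by
    funext ω; simp [hSdef]
  have hMS : Measurable S :=
    Finset.measurable_sum Finset.univ fun i _ => (hmeas i).const_mul (r i)
  have hES : ∫ ω, S ω ∂P = ∑ i, r i * m0 := by
    show ∫ ω, ∑ i, r i * V i ω ∂P = _
    rw [integral_finset_sum _ fun i _ => (hinti i).const_mul (r i)]
    exact Finset.sum_congr rfl fun i _ => by rw [integral_const_mul, hmean i]
  have hL : (∫⁻ ω, ENNReal.ofReal (|∑ i, r i * (V i ω - ∫ ω', V i ω' ∂P)| ^ 2) ∂P)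
      = evariance S P := by
    rw [evariance_eq_lintegral_ofReal, hES]
    refine lintegral_congr fun ω => ?_
    rw [sq_abs]
    have h2 : ∑ i, r i * (V i ω - ∫ ω', V i ω' ∂P) = S ω - ∑ i, r i * m0 := by
      have h3 : ∀ i : Fin n, r i * (V i ω - ∫ ω', V i ω' ∂P) = r i * V i ω - r i * m0 :=
        fun i => by rw [hmean i, mul_sub]
      rw [Finset.sum_congr rfl fun i _ => h3 i, Finset.sum_sub_distrib]
    rw [h2]
  have hR : (∫⁻ ω, ENNReal.ofReal (|V i0 ω - ∫ ω', V i0 ω' ∂P| ^ 2) ∂P)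
      = evariance (V i0) P := by
    rw [evariance_eq_lintegral_ofReal]
    exact lintegral_congr fun ω => by rw [sq_abs]
  rw [hL, hR]
  by_cases hl2 : MemLp (V i0) 2 P
  · have hl2i : ∀ i, MemLp (V i) 2 P := fun i => ((hidd i).memLp_iff).2 hl2
    have hS2 : MemLp S 2 P := by
      rw [hSsum]; exact memLp_finset_sum' _ fun i _ => (hl2i i).const_mul (r i)
    have hpair : Set.Pairwise ↑(Finset.univ : Finset (Fin n))
        fun i j => IndepFun (fun ω => r i * V i ω) (fun ω => r j * V j ω) P := by
      intro i _ j _ hij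
      exact (hindep.indepFun hij).comp (measurable_id'.const_mul (r i))
        (measurable_id'.const_mul (r j))
    have hvar : variance S P = (∑ i, |r i| ^ 2) * variance (V i0) P := by
      rw [hSsum, IndepFun.variance_sum (fun i _ => (hl2i i).const_mul (r i)) hpair]
      have h4 : ∀ i : Fin n, variance (fun ω => r i * V i ω) P
          = |r i| ^ 2 * variance (V i0) P := by
        intro i; rw [variance_const_mul, (hidd i).variance_eq, sq_abs]
      rw [Finset.sum_congr rfl fun i _ => h4 i, ← Finset.sum_mul]
    rw [← hl2.ofReal_variance_eq, ← hS2.ofReal_variance_eq, hvar,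
      ENNReal.ofReal_mul (by positivity)]
  · have htop : evariance (V i0) P = ⊤ :=
      evariance_eq_top (hmeas i0).aestronglyMeasurable hl2
    by_cases hr : ∀ i, r i = 0
    · have h1 : evariance S P = 0 := by
        rw [show S = (0 : Ω → ℝ) from funext fun ω => by simp [hSdef, hr]]
        exact evariance_zero
      have h5 : (∑ i, |r i| ^ 2) = 0 := by simp [hr]
      rw [h1, htop, h5]; simp
    · push_neg at hr
      obtain ⟨j, hj⟩ := hr
      have hq : 0 < ∑ i, |r i| ^ 2 :=
        lt_of_lt_of_le (pow_pos (abs_pos.2 hj) 2)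
          (Finset.single_le_sum (f := fun i => |r i| ^ 2) (fun i _ => by positivity) (Finset.mem_univ j))
      have hStop : evariance S P = ⊤ := by
        by_contra hfin
        have hS2 : MemLp S 2 P :=
          (evariance_lt_top_iff_memLp hMS.aestronglyMeasurable).1 (lt_top_iff_ne_top.2 hfin)
        have hiid' : iIndepFun
            (fun i => fun ω => r i * V i ω) P :=
          hindep.comp _ fun i => measurable_id'.const_mul (r i)
        have hIF : IndepFun (∑ i ∈ Finset.univ.erase j, fun ω => r i * V i ω)
            (fun ω => r j * V j ω) P :=
          hiid'.indepFun_finset_sum_of_notMem (fun i => (hmeas i).const_mul (r i))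
            (Finset.notMem_erase j Finset.univ)
        set R : Ω → ℝ := fun ω => ∑ i ∈ Finset.univ.erase j, r i * V i ω with hRdef
        have hReq : (∑ i ∈ Finset.univ.erase j, fun ω => r i * V i ω) = R := by
          funext ω; simp [hRdef]
        rw [hReq] at hIF
        have hMR : Measurable R :=
          Finset.measurable_sum _ fun i _ => (hmeas i).const_mul (r i)
        have hsum' : MemLp (fun ω => R ω + r j * V j ω) 2 P := by
          have hfun : (fun ω => R ω + r j * V j ω) = S := by
            funext ω
            show (∑ i ∈ Finset.univ.erase j, r i * V i ω) + r j * V j ω = ∑ i, r i * V i ω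
            exact Finset.sum_erase_add _ _ (Finset.mem_univ j)
          rw [hfun]; exact hS2
        have hZ2 := memℒp_two_of_indepFun_add hMR ((hmeas j).const_mul (r j)) hIF hsum'
        have hVj2 : MemLp (V j) 2 P := by
          have h6 := hZ2.const_mul (r j)⁻¹
          have heq : (fun ω => (r j)⁻¹ * (r j * V j ω)) = V j := by
            funext ω; field_simp
          rwa [heq] at h6
        exact hl2 (((hidd j).memLp_iff).1 hVj2)
      rw [hStop, htop, ENNReal.mul_top (ENNReal.ofReal_pos.2 hq).ne']

end Helpers


lemma lintegral_freeze {Ω E : Type*} (m' mX : MeasurableSpace Ω)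
    [mΩ : MeasurableSpace Ω] [mE : MeasurableSpace E]
    (P : Measure Ω) [IsProbabilityMeasure P] (hm' : m' ≤ mΩ) (hmX : mX ≤ mΩ)
    (hindep : Indep m' mX P) (X : Ω → E) (hX : @Measurable Ω E mX mE X)
    (h : E × Ω → ℝ≥0∞) (hh : @Measurable (E × Ω) ℝ≥0∞ (mE.prod m') _ h) :
    ∫⁻ ω, h (X ω, ω) ∂P = ∫⁻ x, ∫⁻ ω, h (x, ω) ∂P ∂(P.map X) := by
  have hXm : Measurable X := hX.mono hmX le_rfl
  haveI : @IsFiniteMeasure Ω m' (P.trim hm') := isFiniteMeasure_trim hm'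
  haveI : IsProbabilityMeasure (P.map X) := Measure.isProbabilityMeasure_map hXm.aemeasurable
  have hΦ : @Measurable Ω (E × Ω) mΩ (mE.prod m') (fun ω => (X ω, ω)) :=
    @Measurable.prod Ω E Ω mΩ mE m' _ hXm (measurable_id.mono le_rfl hm')
  have hprod : @Measure.prod E Ω mE m' (P.map X) (P.trim hm')
      = @Measure.map Ω (E × Ω) mΩ (mE.prod m') (fun ω => (X ω, ω)) P := by
    refine @Measure.prod_eq E Ω mE m' (P.map X) ?_ (P.trim hm') ?_ _ fun s t hs ht => ?_
    · infer_instance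
    · infer_instance
    rw [@Measure.map_apply Ω (E × Ω) mΩ (mE.prod m') P _ hΦ (s ×ˢ t)
      (@MeasurableSet.prod E Ω mE m' s t hs ht)]
    have hpre : (fun ω => (X ω, ω)) ⁻¹' (s ×ˢ t) = t ∩ (X ⁻¹' s) := by
      ext ω; simp [Set.mem_prod, and_comm]
    rw [hpre, (Indep_iff _ _ _).1 hindep t (X ⁻¹' s) ht (hX hs),
      Measure.map_apply hXm hs, trim_measurableSet_eq hm' ht]
    ring
  have e1 : ∫⁻ ω, h (X ω, ω) ∂P
      = ∫⁻ p, h p ∂(@Measure.map Ω (E × Ω) mΩ (mE.prod m') (fun ω => (X ω, ω)) P) :=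
    (@lintegral_map Ω (E × Ω) mΩ (mE.prod m') P h (fun ω => (X ω, ω)) hh hΦ).symm
  have e3 : ∫⁻ p, h p ∂(@Measure.prod E Ω mE m' (P.map X) (P.trim hm'))
      = ∫⁻ x, ∫⁻ ω, h (x, ω) ∂(P.trim hm') ∂(P.map X) :=
    @lintegral_prod E Ω mE m' (P.map X) (P.trim hm') (by infer_instance) h hh.aemeasurable
  rw [e1, ← hprod, e3]
  refine lintegral_congr fun x => ?_
  exact lintegral_trim hm' (hh.comp (@measurable_prodMk_left E Ω mE m' x))



/-- auxiliary σ-algebra generated by all evaluations of the family `U`. -/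
def sigmaU {Ω : Type*} {d n : ℕ} (U : Fin n → ℝ → EuclideanSpace ℝ (Fin d) → Ω → ℝ) :
    MeasurableSpace Ω :=
  sigmaGen (fun (q : Fin n × (ℝ × EuclideanSpace ℝ (Fin d))) ω => U q.1 q.2.1 q.2.2 ω)

/-- auxiliary σ-algebra generated by the process `W`. -/
def sigmaW {Ω : Type*} {d : ℕ} (W : ℝ → Ω → EuclideanSpace ℝ (Fin d)) :
    MeasurableSpace Ω :=
  sigmaGen W

/-- Linear combinations of centered i.i.d. continuous random fields:
`‖∑ rᵢ (Uᵢ − E[Uᵢ])‖ₖ = ‖U₁ − E[U₁]‖ₖ (∑ |rᵢ|²)^(1/2) ≤ ‖U₁‖ₖ (∑ |rᵢ|²)^(1/2)`. -/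
theorem seminorm_linear_combination_iid
    {Ω : Type*} [mΩ : MeasurableSpace Ω] (P : Measure Ω) [IsProbabilityMeasure P]
    (d : ℕ) (T : ℝ) (hT : 0 < T) (ξ : EuclideanSpace ℝ (Fin d))
    (W : ℝ → Ω → EuclideanSpace ℝ (Fin d)) (hW : IsStandardBM P T W)
    (k n : ℕ) (hn : 0 < n) (r : Fin n → ℝ)
    (U : Fin n → ℝ → EuclideanSpace ℝ (Fin d) → Ω → ℝ)
    (hUcont : ∀ i ω, Continuous (fun p : ℝ × EuclideanSpace ℝ (Fin d) => U i p.1 p.2 ω))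
    (hUmeas : ∀ i t x, Measurable (U i t x))
    -- the random fields `U 0, …, U (n-1)` are mutually independent
    (hUindep : iIndep
      (fun i : Fin n =>
        sigmaGen (fun (p : ℝ × EuclideanSpace ℝ (Fin d)) ω => U i p.1 p.2 ω)) P)
    -- the random fields `U 0, …, U (n-1)` are identically distributed
    -- (all finite-dimensional distributions agree)
    (hUident : ∀ (i : Fin n) (m : ℕ) (a : Fin m → ℝ × EuclideanSpace ℝ (Fin d)),
      P.map (fun ω => fun j => U i (a j).1 (a j).2 ω)
        = P.map (fun ω => fun j => U ⟨0, hn⟩ (a j).1 (a j).2 ω))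
    -- the family `(Uᵢ)` is independent of `W`
    (hindW : Indep
      (sigmaGen (fun (q : Fin n × (ℝ × EuclideanSpace ℝ (Fin d))) ω =>
        U q.1 q.2.1 q.2.2 ω))
      (sigmaGen W) P)
    (hint : ∀ t x, Integrable (U ⟨0, hn⟩ t x) P) :
    mlpSeminorm P W ξ T k
        (fun t x ω => ∑ i, r i * (U i t x ω - ∫ ω', U i t x ω' ∂P))
      = mlpSeminorm P W ξ T k
          (fun t x ω => U ⟨0, hn⟩ t x ω - ∫ ω', U ⟨0, hn⟩ t x ω' ∂P)
        * ENNReal.ofReal (Real.sqrt (∑ i, |r i| ^ 2))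
    ∧ mlpSeminorm P W ξ T k
        (fun t x ω => ∑ i, r i * (U i t x ω - ∫ ω', U i t x ω' ∂P))
      ≤ mlpSeminorm P W ξ T k (U ⟨0, hn⟩)
        * ENNReal.ofReal (Real.sqrt (∑ i, |r i| ^ 2)) := by
  classical
  set i0 : Fin n := ⟨0, hn⟩ with hi0
  -- identical distribution of single evaluations
  have hmap1 : ∀ (i : Fin n) (t : ℝ) (x : EuclideanSpace ℝ (Fin d)),
      P.map (U i t x) = P.map (U i0 t x) := by
    intro i t x
    have h : P.map (fun ω => fun _ : Fin 1 => U i t x ω)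
        = P.map (fun ω => fun _ : Fin 1 => U i0 t x ω) := hUident i 1 (fun _ => (t, x))
    have e1 : P.map (U i t x)
        = (P.map (fun ω => fun _ : Fin 1 => U i t x ω)).map (fun g => g 0) := by
      rw [Measure.map_map (measurable_pi_apply 0)
        (measurable_pi_lambda _ fun _ => hUmeas i t x)]
      rfl
    have e2 : P.map (U i0 t x)
        = (P.map (fun ω => fun _ : Fin 1 => U i0 t x ω)).map (fun g => g 0) := by
      rw [Measure.map_map (measurable_pi_apply 0)
        (measurable_pi_lambda _ fun _ => hUmeas i0 t x)]
      rfl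
    rw [e1, e2, h]
  -- independence of evaluations at a fixed space-time point
  have hUindep' : ∀ (t : ℝ) (x : EuclideanSpace ℝ (Fin d)),
      iIndepFun
        (fun i => U i t x) P := by
    intro t x
    rw [iIndepFun_iff_iIndep]
    have h := (iIndep_iff _ P).1 hUindep
    rw [iIndep_iff]
    intro s f hf
    refine h s fun i hi => ?_
    have hle : MeasurableSpace.comap (U i t x) inferInstance
        ≤ sigmaGen (fun (p : ℝ × EuclideanSpace ℝ (Fin d)) ω => U i p.1 p.2 ω) :=
      le_iSup (fun p : ℝ × EuclideanSpace ℝ (Fin d) =>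
        MeasurableSpace.comap (fun ω => U i p.1 p.2 ω) inferInstance) (t, x)
    exact hle _ (hf i hi)
  -- the fixed-point identity
  have hfixed : ∀ (t : ℝ) (x : EuclideanSpace ℝ (Fin d)),
      (∫⁻ ω, ENNReal.ofReal (|∑ i, r i * (U i t x ω - ∫ ω', U i t x ω' ∂P)| ^ 2) ∂P)
        = ENNReal.ofReal (∑ i, |r i| ^ 2) *
          ∫⁻ ω, ENNReal.ofReal (|U i0 t x ω - ∫ ω', U i0 t x ω' ∂P| ^ 2) ∂P :=
    fun t x => lintegral_sq_sum_centered r (fun i => U i t x) i0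
      (fun i => hUmeas i t x) (hUindep' t x) (fun i => hmap1 i t x) (hint t x)
  have hfixedle : ∀ (t : ℝ) (x : EuclideanSpace ℝ (Fin d)),
      (∫⁻ ω, ENNReal.ofReal (|U i0 t x ω - ∫ ω', U i0 t x ω' ∂P| ^ 2) ∂P)
        ≤ ∫⁻ ω, ENNReal.ofReal (|U i0 t x ω| ^ 2) ∂P :=
    fun t x => lintegral_sq_centered_le (U i0 t x) (hUmeas i0 t x)
  -- σ-algebras
  have hm'le : sigmaU U ≤ mΩ := iSup_le fun q => measurable_iff_comap_le.1 (hUmeas q.1 q.2.1 q.2.2)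
  have hmWle : sigmaW W ≤ mΩ := iSup_le fun t => measurable_iff_comap_le.1 (hW.2.2.1 t)
  have hUm' : ∀ (i : Fin n) (t : ℝ) (x : EuclideanSpace ℝ (Fin d)),
      @Measurable Ω ℝ (sigmaU U) _ (U i t x) := by
    intro i t x
    rw [measurable_iff_comap_le]
    exact le_iSup (fun q : Fin n × (ℝ × EuclideanSpace ℝ (Fin d)) =>
      MeasurableSpace.comap (fun ω => U q.1 q.2.1 q.2.2 ω) inferInstance) (i, (t, x))
  -- joint measurability w.r.t. (sigmaU U)
  have hjm' : ∀ (i : Fin n) (t : ℝ),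
      @Measurable (EuclideanSpace ℝ (Fin d) × Ω) ℝ
        ((inferInstance : MeasurableSpace (EuclideanSpace ℝ (Fin d))).prod (sigmaU U)) _
        (fun p => U i t p.1 p.2) :=
    fun i t => measurable_uncurry_of_continuous_of_measurable (m := sigmaU U)
      (u := fun x ω => U i t x ω)
      (fun ω => (hUcont i ω).comp (Continuous.prodMk_right t))
      (fun x => hUm' i t x)
  -- measurability of the mean function
  have hmint : ∀ (i : Fin n) (t : ℝ),
      Measurable (fun x : EuclideanSpace ℝ (Fin d) => ∫ ω', U i t x ω' ∂P) := by
    intro i t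
    have hj : StronglyMeasurable (fun p : EuclideanSpace ℝ (Fin d) × Ω => U i t p.1 p.2) :=
      Measurable.stronglyMeasurable
        (measurable_uncurry_of_continuous_of_measurable (m := mΩ)
          (u := fun x ω => U i t x ω)
          (fun ω => (hUcont i ω).comp (Continuous.prodMk_right t)) (fun x => hUmeas i t x))
    exact hj.integral_prod_right'.measurable
  -- measurability of X_t w.r.t. the Brownian σ-algebra
  have hXmeas : ∀ t : ℝ,
      @Measurable Ω (EuclideanSpace ℝ (Fin d)) (sigmaW W) _ (fun ω => ξ + W t ω) := by
    intro t
    have h1 : @Measurable Ω (EuclideanSpace ℝ (Fin d)) (sigmaW W) _ (W t) :=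
      measurable_iff_comap_le.2
        (le_iSup (fun s => MeasurableSpace.comap (W s) inferInstance) t)
    exact h1.const_add ξ
  -- key identity at a fixed time, with the random spatial point
  have hkey1 : ∀ t : ℝ,
      (∫⁻ ω, ENNReal.ofReal
          (|∑ i, r i * (U i t (ξ + W t ω) ω - ∫ ω', U i t (ξ + W t ω) ω' ∂P)| ^ 2) ∂P)
        = ENNReal.ofReal (∑ i, |r i| ^ 2) *
          ∫⁻ ω, ENNReal.ofReal
            (|U i0 t (ξ + W t ω) ω - ∫ ω', U i0 t (ξ + W t ω) ω' ∂P| ^ 2) ∂P := by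
    intro t
    set X : Ω → EuclideanSpace ℝ (Fin d) := fun ω => ξ + W t ω with hXdef
    set h1 : EuclideanSpace ℝ (Fin d) × Ω → ℝ≥0∞ := fun p =>
      ENNReal.ofReal (|∑ i, r i * (U i t p.1 p.2 - ∫ ω', U i t p.1 ω' ∂P)| ^ 2) with h1def
    set h2 : EuclideanSpace ℝ (Fin d) × Ω → ℝ≥0∞ := fun p =>
      ENNReal.ofReal (|U i0 t p.1 p.2 - ∫ ω', U i0 t p.1 ω' ∂P| ^ 2) with h2def
    have hh1 : @Measurable (EuclideanSpace ℝ (Fin d) × Ω) ℝ≥0∞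
        ((inferInstance : MeasurableSpace (EuclideanSpace ℝ (Fin d))).prod (sigmaU U)) _ h1 := by
      letI : MeasurableSpace Ω := sigmaU U
      have hsum : Measurable (fun p : EuclideanSpace ℝ (Fin d) × Ω =>
          ∑ i, r i * (U i t p.1 p.2 - ∫ ω', U i t p.1 ω' ∂P)) :=
        Finset.measurable_sum Finset.univ fun i _ =>
          (((hjm' i t).sub ((hmint i t).comp measurable_fst)).const_mul (r i))
      exact ((hsum.abs.pow_const 2).ennreal_ofReal)
    have hh2 : @Measurable (EuclideanSpace ℝ (Fin d) × Ω) ℝ≥0∞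
        ((inferInstance : MeasurableSpace (EuclideanSpace ℝ (Fin d))).prod (sigmaU U)) _ h2 := by
      letI : MeasurableSpace Ω := sigmaU U
      exact ((((hjm' i0 t).sub ((hmint i0 t).comp measurable_fst)).abs.pow_const 2).ennreal_ofReal)
    have hfr1 := lintegral_freeze (sigmaU U) (sigmaW W) P hm'le hmWle hindW X (hXmeas t) h1 hh1
    have hfr2 := lintegral_freeze (sigmaU U) (sigmaW W) P hm'le hmWle hindW X (hXmeas t) h2 hh2
    calc (∫⁻ ω, ENNReal.ofReal
          (|∑ i, r i * (U i t (ξ + W t ω) ω - ∫ ω', U i t (ξ + W t ω) ω' ∂P)| ^ 2) ∂P)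
        = ∫⁻ x, ∫⁻ ω, h1 (x, ω) ∂P ∂(P.map X) := hfr1
      _ = ∫⁻ x, ENNReal.ofReal (∑ i, |r i| ^ 2) * ∫⁻ ω, h2 (x, ω) ∂P ∂(P.map X) :=
          lintegral_congr fun x => hfixed t x
      _ = ENNReal.ofReal (∑ i, |r i| ^ 2) * ∫⁻ x, ∫⁻ ω, h2 (x, ω) ∂P ∂(P.map X) :=
          lintegral_const_mul' _ _ ENNReal.ofReal_ne_top
      _ = ENNReal.ofReal (∑ i, |r i| ^ 2) * ∫⁻ ω, ENNReal.ofReal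
            (|U i0 t (ξ + W t ω) ω - ∫ ω', U i0 t (ξ + W t ω) ω' ∂P| ^ 2) ∂P := by
          rw [← hfr2]
  have hkey2 : ∀ t : ℝ,
      (∫⁻ ω, ENNReal.ofReal
          (|U i0 t (ξ + W t ω) ω - ∫ ω', U i0 t (ξ + W t ω) ω' ∂P| ^ 2) ∂P)
        ≤ ∫⁻ ω, ENNReal.ofReal (|U i0 t (ξ + W t ω) ω| ^ 2) ∂P := by
    intro t
    set X : Ω → EuclideanSpace ℝ (Fin d) := fun ω => ξ + W t ω with hXdef
    set h2 : EuclideanSpace ℝ (Fin d) × Ω → ℝ≥0∞ := fun p =>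
      ENNReal.ofReal (|U i0 t p.1 p.2 - ∫ ω', U i0 t p.1 ω' ∂P| ^ 2) with h2def
    set h3 : EuclideanSpace ℝ (Fin d) × Ω → ℝ≥0∞ := fun p =>
      ENNReal.ofReal (|U i0 t p.1 p.2| ^ 2) with h3def
    have hh2 : @Measurable (EuclideanSpace ℝ (Fin d) × Ω) ℝ≥0∞
        ((inferInstance : MeasurableSpace (EuclideanSpace ℝ (Fin d))).prod (sigmaU U)) _ h2 := by
      letI : MeasurableSpace Ω := sigmaU U
      exact ((((hjm' i0 t).sub ((hmint i0 t).comp measurable_fst)).abs.pow_const 2).ennreal_ofReal)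
    have hh3 : @Measurable (EuclideanSpace ℝ (Fin d) × Ω) ℝ≥0∞
        ((inferInstance : MeasurableSpace (EuclideanSpace ℝ (Fin d))).prod (sigmaU U)) _ h3 := by
      letI : MeasurableSpace Ω := sigmaU U
      exact (((hjm' i0 t).abs.pow_const 2).ennreal_ofReal)
    have hfr2 := lintegral_freeze (sigmaU U) (sigmaW W) P hm'le hmWle hindW X (hXmeas t) h2 hh2
    have hfr3 := lintegral_freeze (sigmaU U) (sigmaW W) P hm'le hmWle hindW X (hXmeas t) h3 hh3
    calc (∫⁻ ω, ENNReal.ofReal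
          (|U i0 t (ξ + W t ω) ω - ∫ ω', U i0 t (ξ + W t ω) ω' ∂P| ^ 2) ∂P)
        = ∫⁻ x, ∫⁻ ω, h2 (x, ω) ∂P ∂(P.map X) := hfr2
      _ ≤ ∫⁻ x, ∫⁻ ω, h3 (x, ω) ∂P ∂(P.map X) := lintegral_mono fun x => hfixedle t x
      _ = ∫⁻ ω, ENNReal.ofReal (|U i0 t (ξ + W t ω) ω| ^ 2) ∂P := hfr3.symm
  -- the two statements at the level of squared seminorms
  have hstep1 : mlpSeminormSq P W ξ T k
        (fun t x ω => ∑ i, r i * (U i t x ω - ∫ ω', U i t x ω' ∂P))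
      = ENNReal.ofReal (∑ i, |r i| ^ 2) * mlpSeminormSq P W ξ T k
          (fun t x ω => U i0 t x ω - ∫ ω', U i0 t x ω' ∂P) := by
    cases k with
    | zero => exact hfixed 0 ξ
    | succ j =>
      have hpt : ∀ t : ℝ,
          (ENNReal.ofReal (t ^ j / (Nat.factorial j)) *
            ∫⁻ ω, ENNReal.ofReal
              (|∑ i, r i * (U i t (ξ + W t ω) ω - ∫ ω', U i t (ξ + W t ω) ω' ∂P)| ^ 2) ∂P)
          = ENNReal.ofReal (∑ i, |r i| ^ 2) *
            (ENNReal.ofReal (t ^ j / (Nat.factorial j)) *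
              ∫⁻ ω, ENNReal.ofReal
                (|U i0 t (ξ + W t ω) ω - ∫ ω', U i0 t (ξ + W t ω) ω' ∂P| ^ 2) ∂P) := by
        intro t
        rw [hkey1 t]
        ring
      simp only [mlpSeminormSq]
      rw [lintegral_congr hpt, lintegral_const_mul' _ _ ENNReal.ofReal_ne_top,
        ← mul_assoc, mul_comm (ENNReal.ofReal (1 / T ^ (j + 1))), mul_assoc]
  have hstep2 : mlpSeminormSq P W ξ T k
        (fun t x ω => U i0 t x ω - ∫ ω', U i0 t x ω' ∂P)
      ≤ mlpSeminormSq P W ξ T k (U i0) := by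
    cases k with
    | zero => exact hfixedle 0 ξ
    | succ j =>
      refine mul_le_mul_right ?_ _
      exact lintegral_mono fun t => mul_le_mul_right (hkey2 t) _
  -- conclude
  have hq : (0 : ℝ) ≤ ∑ i, |r i| ^ 2 := by positivity
  have hofc : (ENNReal.ofReal (∑ i, |r i| ^ 2)) ^ (1 / 2 : ℝ)
      = ENNReal.ofReal (Real.sqrt (∑ i, |r i| ^ 2)) := by
    rw [ENNReal.ofReal_rpow_of_nonneg hq (by norm_num), Real.sqrt_eq_rpow]
  constructor
  · show (mlpSeminormSq P W ξ T k _) ^ (1 / 2 : ℝ)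
      = (mlpSeminormSq P W ξ T k _) ^ (1 / 2 : ℝ) * _
    rw [hstep1, ENNReal.mul_rpow_of_nonneg _ _ (by norm_num : (0:ℝ) ≤ 1 / 2), mul_comm, hofc]
  · show (mlpSeminormSq P W ξ T k _) ^ (1 / 2 : ℝ)
      ≤ (mlpSeminormSq P W ξ T k _) ^ (1 / 2 : ℝ) * _
    rw [hstep1, ENNReal.mul_rpow_of_nonneg _ _ (by norm_num : (0:ℝ) ≤ 1 / 2), mul_comm, hofc]
    exact mul_le_mul_left (ENNReal.rpow_le_rpow hstep2 (by norm_num)) _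
end

section
/- Let d ∈ ℕ and let (RV_{n,M})_{n,M ∈ ℤ} ⊆ ℕ₀ satisfy RV_{0,M} = 0 for all M ∈ ℕ and, for all n, M ∈ ℕ, RV_{n,M} ≤ d·Mⁿ + Σ_{l=0}^{n-1} M^{n-l} · (d + 1 + RV_{l,M} + 1_ℕ(l)·RV_{l-1,M}). Then for all n, M ∈ ℕ it holds that RV_{n,M} ≤ d·(5M)ⁿ. -/
/-- Computational effort bound for multilevel Picard approximations:
if `RV 0 M = 0` and `RV n M ≤ d Mⁿ + ∑_{l<n} M^(n-l) (d + 1 + RV l M + 1_{l≥1} RV (l-1) M)`,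
then `RV n M ≤ d (5M)ⁿ`. -/
theorem mlp_cost_bound (d : ℕ) (hd : 1 ≤ d) (RV : ℕ → ℕ → ℕ)
    (h0 : ∀ M, 1 ≤ M → RV 0 M = 0)
    (hrec : ∀ n M, 1 ≤ n → 1 ≤ M →
      RV n M ≤ d * M ^ n + ∑ l ∈ Finset.range n,
        M ^ (n - l) * (d + 1 + RV l M + (if 1 ≤ l then RV (l - 1) M else 0))) :
    ∀ n M, 1 ≤ n → 1 ≤ M → RV n M ≤ d * (5 * M) ^ n := by
  have geom : ∀ n : ℕ, 4 * ∑ l ∈ Finset.range n, 5 ^ l + 1 = 5 ^ n := by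
    intro n
    induction n with
    | zero => simp
    | succ k ih =>
      rw [Finset.sum_range_succ, pow_succ]
      nlinarith [ih]
  have key : ∀ n M, 1 ≤ M → RV n M ≤ d * (5 * M) ^ n := by
    intro n
    induction n using Nat.strong_induction_on with
    | _ n ih =>
      intro M hM
      rcases Nat.eq_zero_or_pos n with rfl | hn
      · simp [h0 M hM]
      · have step : ∀ l ∈ Finset.range n,
            M ^ (n - l) * (d + 1 + RV l M + (if 1 ≤ l then RV (l - 1) M else 0))
              ≤ 4 * d * M ^ n * 5 ^ l := by
          intro l hl
          have hln : l < n := Finset.mem_range.mp hl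
          have h1 : RV l M ≤ d * (5 * M) ^ l := ih l hln M hM
          have h2 : (if 1 ≤ l then RV (l - 1) M else 0) ≤ d * (5 * M) ^ l := by
            split
            · exact le_trans (ih (l - 1) (by omega) M hM)
                (Nat.mul_le_mul_left d (Nat.pow_le_pow_right (by omega) (by omega)))
            · positivity
          have h3 : d + 1 ≤ 2 * d * (5 * M) ^ l := by
            have : 1 ≤ (5 * M) ^ l := Nat.one_le_pow _ _ (by omega)
            nlinarith
          have h4 : d + 1 + RV l M + (if 1 ≤ l then RV (l - 1) M else 0)
              ≤ 4 * d * (5 * M) ^ l := by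
            calc d + 1 + RV l M + (if 1 ≤ l then RV (l - 1) M else 0)
                ≤ 2 * d * (5 * M) ^ l + d * (5 * M) ^ l + d * (5 * M) ^ l :=
                  add_le_add (add_le_add h3 h1) h2
              _ = 4 * d * (5 * M) ^ l := by ring
          calc M ^ (n - l) * (d + 1 + RV l M + (if 1 ≤ l then RV (l - 1) M else 0))
              ≤ M ^ (n - l) * (4 * d * (5 * M) ^ l) := Nat.mul_le_mul_left _ h4
            _ = 4 * d * (M ^ (n - l) * M ^ l) * 5 ^ l := by rw [mul_pow]; ring
            _ = 4 * d * M ^ n * 5 ^ l := by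
                rw [← pow_add, Nat.sub_add_cancel hln.le]
        calc RV n M ≤ d * M ^ n + ∑ l ∈ Finset.range n,
              M ^ (n - l) * (d + 1 + RV l M + (if 1 ≤ l then RV (l - 1) M else 0)) :=
            hrec n M hn hM
          _ ≤ d * M ^ n + ∑ l ∈ Finset.range n, 4 * d * M ^ n * 5 ^ l :=
              Nat.add_le_add_left (Finset.sum_le_sum step) _
          _ = d * M ^ n * (4 * ∑ l ∈ Finset.range n, 5 ^ l + 1) := by
              have hsum : ∑ l ∈ Finset.range n, 4 * d * M ^ n * 5 ^ l
                  = d * M ^ n * (4 * ∑ l ∈ Finset.range n, 5 ^ l) := by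
                rw [Finset.mul_sum, Finset.mul_sum]
                exact Finset.sum_congr rfl fun _ _ => by ring
              rw [hsum]
              ring
          _ = d * (5 * M) ^ n := by rw [geom n, mul_pow]; ring
  intro n M _ hM
  exact key n M hM
end

section
/- Let (Ω, F, P) be a probability space, T, p, L ∈ [0,∞), d ∈ ℕ, let u, v ∈ C([0,T]×ℝ^d, ℝ), f ∈ C([0,T]×ℝ^d×ℝ, ℝ) satisfy |f(t,x,a) − f(t,x,b)| ≤ L|a−b| for all t,x,a,b, and let W be a d-dimensional standard Brownian motion. Then for all t ∈ [0,T], x ∈ ℝ^d, λ ∈ (0,∞): e^{λt} E[ ∫ₜᵀ |f(s, x+W_{s−t}, u(s, x+W_{s−t})) − f(s, x+W_{s−t}, v(s, x+W_{s−t}))| ds ] ≤ (2^{max{p−1,0}} L (1 + ‖x‖^p + E[‖W_T‖^p]) / λ) · sup_{s∈[t,T]} sup_{y∈ℝ^d} ( e^{λs} |u(s,y) − v(s,y)| / (1 + ‖y‖^p) ). -/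
open MeasureTheory ProbabilityTheory
open scoped NNReal ENNReal

lemma aux_rpow_add_le (a b q : ℝ) (ha : 0 ≤ a) (hb : 0 ≤ b) (hq : 0 ≤ q) :
    (a + b) ^ q ≤ 2 ^ max (q - 1) 0 * (a ^ q + b ^ q) := by
  rcases le_total q 1 with h1 | h1
  · rw [max_eq_right (by linarith), Real.rpow_zero, one_mul]
    have := NNReal.rpow_add_le_add_rpow (Real.toNNReal a) (Real.toNNReal b) hq h1
    have h2 := (NNReal.coe_le_coe).2 this
    push_cast at h2
    simpa [Real.coe_toNNReal a ha, Real.coe_toNNReal b hb] using h2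
  · rw [max_eq_left (by linarith)]
    have := NNReal.rpow_add_le_mul_rpow_add_rpow (Real.toNNReal a) (Real.toNNReal b) h1
    have h2 := (NNReal.coe_le_coe).2 this
    push_cast at h2
    simpa [Real.coe_toNNReal a ha, Real.coe_toNNReal b hb] using h2

lemma aux_map_pi {Ω : Type*} [MeasurableSpace Ω] (P : Measure Ω) [IsProbabilityMeasure P]
    {d : ℕ} (f : Fin d → Ω → ℝ) (hf : ∀ i, Measurable (f i))
    (h : iIndepFun f P) :
    P.map (fun ω i => f i ω) = Measure.pi (fun i => P.map (f i)) := by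
  refine (Measure.pi_eq fun s hs => ?_).symm
  rw [Measure.map_apply (measurable_pi_lambda _ hf) (MeasurableSet.univ_pi hs)]
  have hpre : (fun ω i => f i ω) ⁻¹' Set.pi Set.univ s = ⋂ i ∈ Finset.univ, f i ⁻¹' s i := by
    ext ω; simp [Set.mem_pi]
  rw [hpre, h.measure_inter_preimage_eq_mul Finset.univ (fun i _ => hs i)]
  exact Finset.prod_congr rfl fun i _ => (Measure.map_apply (hf i) (hs i)).symm

lemma aux_pi_map_scale {d : ℕ} (c : ℝ) (μ : Measure ℝ) [IsProbabilityMeasure μ] :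
    Measure.pi (fun _ : Fin d => μ.map (c * ·)) =
      (Measure.pi fun _ : Fin d => μ).map (fun y i => c * y i) := by
  have hm : Measurable (fun (y : Fin d → ℝ) i => c * y i) := by
    fun_prop
  haveI : IsProbabilityMeasure (μ.map (c * ·)) :=
    Measure.isProbabilityMeasure_map (measurable_const_mul c).aemeasurable
  refine Measure.pi_eq fun s hs => ?_
  rw [Measure.map_apply hm (MeasurableSet.univ_pi hs)]
  have hpre : (fun (y : Fin d → ℝ) i => c * y i) ⁻¹' Set.pi Set.univ s
      = Set.pi Set.univ (fun i => (c * ·) ⁻¹' s i) := by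
    ext y; simp [Set.mem_pi]
  rw [hpre, Measure.pi_pi]
  exact Finset.prod_congr rfl fun i _ =>
    (Measure.map_apply (measurable_const_mul c) (hs i)).symm

lemma aux_phi_meas {d : ℕ} (p : ℝ) (hp : 0 ≤ p) :
    Measurable (fun y : Fin d → ℝ => ENNReal.ofReal (Real.sqrt (∑ i, (y i)^2) ^ p)) := by
  refine ENNReal.measurable_ofReal.comp ?_
  exact (Real.continuous_rpow_const hp).measurable.comp
    ((Real.continuous_sqrt.measurable).comp
      (Finset.measurable_sum _ fun i _ => (measurable_pi_apply i).pow_const 2))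

lemma aux_law {Ω : Type*} [MeasurableSpace Ω] {P : Measure Ω} [IsProbabilityMeasure P]
    {d : ℕ} {T : ℝ} {W : ℝ → Ω → EuclideanSpace ℝ (Fin d)} (hW : IsStandardBM P T W)
    (q : ℝ) (hq0 : 0 ≤ q) (hqT : q ≤ T) :
    P.map (fun ω i => W q ω i) = Measure.pi (fun _ : Fin d => gaussianReal 0 (Real.toNNReal q)) := by
  obtain ⟨h0, hcont, hmeas, hincr, hlaw⟩ := hW
  obtain ⟨hindep, hgauss⟩ := hlaw 0 q le_rfl hq0 hqT
  have hzero : ∀ ω, W q ω - W 0 ω = W q ω := fun ω => by rw [h0 ω, sub_zero]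
  have hrw : (fun (i : Fin d) ω => (W q ω - W 0 ω) i) = fun (i : Fin d) ω => W q ω i := by
    funext i ω; rw [hzero]
  rw [hrw] at hindep
  have hf : ∀ i : Fin d, Measurable fun ω => W q ω i :=
    fun i => (measurable_pi_apply i).comp ((WithLp.measurable_ofLp _ _).comp (hmeas q))
  simp only [h0, sub_zero] at hgauss
  rw [aux_map_pi P _ hf hindep]
  congr 1
  funext i
  simpa using hgauss i

lemma aux_moment_eq {Ω : Type*} [MeasurableSpace Ω] {P : Measure Ω} [IsProbabilityMeasure P]
    {d : ℕ} {T : ℝ} {W : ℝ → Ω → EuclideanSpace ℝ (Fin d)} (hW : IsStandardBM P T W)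
    (p : ℝ) (hp : 0 ≤ p) (q : ℝ) (hq0 : 0 ≤ q) (hqT : q ≤ T) :
    ∫⁻ ω, ENNReal.ofReal (‖W q ω‖ ^ p) ∂P
      = ENNReal.ofReal (Real.sqrt q ^ p) *
        ∫⁻ y : Fin d → ℝ, ENNReal.ofReal (Real.sqrt (∑ i, (y i)^2) ^ p)
          ∂(Measure.pi fun _ : Fin d => gaussianReal 0 1) := by
  have hφ := aux_phi_meas (d := d) p hp
  have hcoords : Measurable (fun ω i => W q ω i) :=
    measurable_pi_lambda _ fun i => (measurable_pi_apply i).comp ((WithLp.measurable_ofLp _ _).comp (hW.2.2.1 q))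
  have h1 : ∀ ω, ENNReal.ofReal (‖W q ω‖ ^ p)
      = ENNReal.ofReal (Real.sqrt (∑ i, ((W q ω i))^2) ^ p) := by
    intro ω
    rw [EuclideanSpace.norm_eq]
    simp [sq_abs]
  simp_rw [h1]
  rw [← lintegral_map hφ hcoords, aux_law hW q hq0 hqT]
  have hg : gaussianReal 0 (Real.toNNReal q) = (gaussianReal 0 1).map (Real.sqrt q * ·) := by
    rw [gaussianReal_map_const_mul]
    congr 1
    · rw [mul_zero]
    · apply NNReal.coe_injective
      simp [Real.sq_sqrt hq0, Real.coe_toNNReal _ hq0]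
  rw [hg, aux_pi_map_scale, lintegral_map hφ
    (measurable_pi_lambda _ fun i => (measurable_pi_apply i).const_mul _)]
  have h2 : ∀ y : Fin d → ℝ,
      ENNReal.ofReal (Real.sqrt (∑ i, (Real.sqrt q * y i)^2) ^ p)
        = ENNReal.ofReal (Real.sqrt q ^ p) *
          ENNReal.ofReal (Real.sqrt (∑ i, (y i)^2) ^ p) := by
    intro y
    have hsum : ∑ i, (Real.sqrt q * y i)^2 = q * ∑ i, (y i)^2 := by
      rw [Finset.mul_sum]
      refine Finset.sum_congr rfl fun i _ => ?_
      rw [mul_pow, Real.sq_sqrt hq0]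
    rw [hsum, Real.sqrt_mul hq0, Real.mul_rpow (Real.sqrt_nonneg _) (Real.sqrt_nonneg _),
      ENNReal.ofReal_mul (Real.rpow_nonneg (Real.sqrt_nonneg _) _)]
  simp_rw [h2]
  rw [lintegral_const_mul _ hφ]

lemma aux_moment_mono {Ω : Type*} [MeasurableSpace Ω] {P : Measure Ω} [IsProbabilityMeasure P]
    {d : ℕ} {T : ℝ} {W : ℝ → Ω → EuclideanSpace ℝ (Fin d)} (hW : IsStandardBM P T W)
    (p : ℝ) (hp : 0 ≤ p) (r : ℝ) (hr0 : 0 ≤ r) (hrT : r ≤ T) :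
    ∫⁻ ω, ENNReal.ofReal (‖W r ω‖ ^ p) ∂P ≤ ∫⁻ ω, ENNReal.ofReal (‖W T ω‖ ^ p) ∂P := by
  rw [aux_moment_eq hW p hp r hr0 hrT, aux_moment_eq hW p hp T (hr0.trans hrT) le_rfl]
  exact mul_le_mul_left (ENNReal.ofReal_le_ofReal
    (Real.rpow_le_rpow (Real.sqrt_nonneg _) (Real.sqrt_le_sqrt hrT) hp)) _

lemma aux_exp_integral (t T lam : ℝ) (htT : t ≤ T) (hlam : 0 < lam) :
    ∫⁻ s in Set.Icc t T, ENNReal.ofReal (Real.exp (-(lam * s)))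
      ≤ ENNReal.ofReal (Real.exp (-(lam * t)) / lam) := by
  have hcont : Continuous fun s : ℝ => Real.exp (-(lam * s)) :=
    Real.continuous_exp.comp (continuous_const.mul continuous_id).neg
  rw [← ofReal_integral_eq_lintegral_ofReal (hcont.integrableOn_Icc)
    (Filter.Eventually.of_forall fun s => (Real.exp_pos _).le)]
  apply ENNReal.ofReal_le_ofReal
  have hderiv : ∀ s : ℝ, HasDerivAt (fun s => -(Real.exp (-(lam * s)) / lam))
      (Real.exp (-(lam * s))) s := by
    intro s
    have h1 : HasDerivAt (fun s : ℝ => -(lam * s)) (-lam) s := by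
      exact (((hasDerivAt_id' s).const_mul lam).fun_neg).congr_deriv (by ring)
    have h2 := (h1.exp.div_const lam).fun_neg
    exact h2.congr_deriv (by rw [mul_neg, neg_div, neg_neg, mul_div_assoc, div_self hlam.ne', mul_one])
  have hIcc : ∫ s in Set.Icc t T, Real.exp (-(lam * s))
      = ∫ s in t..T, Real.exp (-(lam * s)) := by
    rw [MeasureTheory.integral_Icc_eq_integral_Ioc, intervalIntegral.integral_of_le htT]
  rw [hIcc, intervalIntegral.integral_eq_sub_of_hasDerivAt (fun s _ => hderiv s)
    (hcont.intervalIntegrable _ _)]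
  have h3 : 0 ≤ Real.exp (-(lam * T)) / lam := by positivity
  linarith
/-- A priori Lipschitz estimate: for `f` Lipschitz in the last variable,
`e^{λt} E[∫ₜᵀ |f(s,x+W_{s−t},u(…)) − f(s,x+W_{s−t},v(…))| ds]
  ≤ (2^max{p−1,0} L (1+‖x‖^p+E[‖W_T‖^p]) / λ)
      sup_{s∈[t,T]} sup_y e^{λs}|u(s,y)−v(s,y)|/(1+‖y‖^p)`. -/
theorem a_priori_lipschitz_estimate
    {Ω : Type*} [mΩ : MeasurableSpace Ω] (P : Measure Ω) [IsProbabilityMeasure P]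
    (T p L : ℝ) (hT : 0 ≤ T) (hp : 0 ≤ p) (hL : 0 ≤ L) (d : ℕ)
    (u v : ℝ → EuclideanSpace ℝ (Fin d) → ℝ)
    (f : ℝ → EuclideanSpace ℝ (Fin d) → ℝ → ℝ)
    (hu : Continuous (fun q : ℝ × EuclideanSpace ℝ (Fin d) => u q.1 q.2))
    (hv : Continuous (fun q : ℝ × EuclideanSpace ℝ (Fin d) => v q.1 q.2))
    (hf : Continuous (fun q : ℝ × EuclideanSpace ℝ (Fin d) × ℝ => f q.1 q.2.1 q.2.2))
    (hLip : ∀ t ∈ Set.Icc (0 : ℝ) T, ∀ x a b, |f t x a - f t x b| ≤ L * |a - b|)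
    (W : ℝ → Ω → EuclideanSpace ℝ (Fin d)) (hW : IsStandardBM P T W) :
    ∀ t ∈ Set.Icc (0 : ℝ) T, ∀ x, ∀ lam : ℝ, 0 < lam →
      ENNReal.ofReal (Real.exp (lam * t)) *
          ∫⁻ ω, (∫⁻ s in Set.Icc t T,
            ENNReal.ofReal |f s (x + W (s - t) ω) (u s (x + W (s - t) ω))
              - f s (x + W (s - t) ω) (v s (x + W (s - t) ω))|) ∂P
        ≤ (ENNReal.ofReal (2 ^ max (p - 1) 0 * L) *
              (1 + ENNReal.ofReal (‖x‖ ^ p) +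
                ∫⁻ ω, ENNReal.ofReal (‖W T ω‖ ^ p) ∂P) / ENNReal.ofReal lam) *
            ⨆ s ∈ Set.Icc t T, ⨆ y : EuclideanSpace ℝ (Fin d),
              ENNReal.ofReal (Real.exp (lam * s) * |u s y - v s y| / (1 + ‖y‖ ^ p)) := by
  intro t ht x lam hlam
  set c : ℝ := 2 ^ max (p - 1) 0 with hc
  have hc1 : (1:ℝ) ≤ c := by
    rw [hc]
    calc (1:ℝ) = 2 ^ (0:ℝ) := (Real.rpow_zero 2).symm
    _ ≤ 2 ^ max (p - 1) 0 := Real.rpow_le_rpow_of_exponent_le one_le_two (le_max_right _ _)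
  have hc0 : (0:ℝ) ≤ c := zero_le_one.trans hc1
  set M : ℝ≥0∞ := ⨆ s ∈ Set.Icc t T, ⨆ y : EuclideanSpace ℝ (Fin d),
      ENNReal.ofReal (Real.exp (lam * s) * |u s y - v s y| / (1 + ‖y‖ ^ p)) with hM
  set B : ℝ≥0∞ := ∫⁻ ω, ENNReal.ofReal (‖W T ω‖ ^ p) ∂P with hB
  set A : ℝ≥0∞ := 1 + ENNReal.ofReal (‖x‖ ^ p) + B with hA
  set g : ℝ → Ω → ℝ≥0∞ := fun s ω =>
    ENNReal.ofReal (Real.exp (-(lam * s)) * (c * L)) *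
      ((1 + ENNReal.ofReal (‖x‖ ^ p) + ENNReal.ofReal (‖W (s - t) ω‖ ^ p)) * M) with hg
  have hexp_meas : Measurable fun s : ℝ => ENNReal.ofReal (Real.exp (-(lam * s)) * (c * L)) :=
    ENNReal.measurable_ofReal.comp
      (((Real.continuous_exp.comp (continuous_const.mul continuous_id).neg).mul
        continuous_const).measurable)
  have hWnorm_meas : ∀ r : ℝ, Measurable fun ω => ENNReal.ofReal (‖W r ω‖ ^ p) := fun r =>
    ENNReal.measurable_ofReal.comp
      ((Real.continuous_rpow_const hp).measurable.comp (hW.2.2.1 r).norm)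
  have hgs_meas : ∀ ω, Measurable fun s => g s ω := by
    intro ω
    apply hexp_meas.mul
    apply Measurable.mul _ measurable_const
    apply Measurable.const_add
    exact ENNReal.measurable_ofReal.comp
      ((Real.continuous_rpow_const hp).measurable.comp
        (((hW.2.1 ω).comp (continuous_id.sub continuous_const)).norm.measurable))
  -- Step 1: pointwise bound
  have step1 : ∀ s ∈ Set.Icc t T, ∀ ω : Ω,
      ENNReal.ofReal |f s (x + W (s - t) ω) (u s (x + W (s - t) ω))
          - f s (x + W (s - t) ω) (v s (x + W (s - t) ω))| ≤ g s ω := by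
    intro s hs ω
    set y : EuclideanSpace ℝ (Fin d) := x + W (s - t) ω with hy
    have hs0 : (0:ℝ) ≤ s := ht.1.trans hs.1
    have hyp0 : (0:ℝ) < 1 + ‖y‖ ^ p := by positivity
    have h1 : |f s y (u s y) - f s y (v s y)| ≤ L * |u s y - v s y| :=
      hLip s ⟨hs0, hs.2⟩ y _ _
    have hfac : L * |u s y - v s y|
        = (L * Real.exp (-(lam * s)) * (1 + ‖y‖ ^ p)) *
            (Real.exp (lam * s) * |u s y - v s y| / (1 + ‖y‖ ^ p)) := by
      rw [Real.exp_neg]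
      field_simp
    have hMle : ENNReal.ofReal (Real.exp (lam * s) * |u s y - v s y| / (1 + ‖y‖ ^ p)) ≤ M := by
      rw [hM]
      refine le_trans ?_ (le_biSup (fun s' => ⨆ y' : EuclideanSpace ℝ (Fin d),
        ENNReal.ofReal (Real.exp (lam * s') * |u s' y' - v s' y'| / (1 + ‖y'‖ ^ p))) hs)
      exact le_iSup (fun y' : EuclideanSpace ℝ (Fin d) =>
        ENNReal.ofReal (Real.exp (lam * s) * |u s y' - v s y'| / (1 + ‖y'‖ ^ p))) y
    have hnorm1 : ‖y‖ ^ p ≤ c * (‖x‖ ^ p + ‖W (s - t) ω‖ ^ p) := by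
      refine le_trans (Real.rpow_le_rpow (norm_nonneg _) (norm_add_le x _) hp) ?_
      exact aux_rpow_add_le _ _ p (norm_nonneg _) (norm_nonneg _) hp
    have hnorm : 1 + ‖y‖ ^ p ≤ c * (1 + ‖x‖ ^ p + ‖W (s - t) ω‖ ^ p) := by
      nlinarith [Real.rpow_nonneg (norm_nonneg x) p,
        Real.rpow_nonneg (norm_nonneg (W (s - t) ω)) p]
    calc ENNReal.ofReal |f s y (u s y) - f s y (v s y)|
        ≤ ENNReal.ofReal (L * |u s y - v s y|) := ENNReal.ofReal_le_ofReal h1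
      _ = ENNReal.ofReal (L * Real.exp (-(lam * s)) * (1 + ‖y‖ ^ p)) *
            ENNReal.ofReal (Real.exp (lam * s) * |u s y - v s y| / (1 + ‖y‖ ^ p)) := by
          rw [← ENNReal.ofReal_mul (by positivity), ← hfac]
      _ ≤ ENNReal.ofReal (L * Real.exp (-(lam * s)) * (1 + ‖y‖ ^ p)) * M :=
          mul_le_mul_right hMle _
      _ ≤ g s ω := by
          rw [hg]
          simp only
          rw [← mul_assoc]
          refine mul_le_mul_left ?_ M
          calc ENNReal.ofReal (L * Real.exp (-(lam * s)) * (1 + ‖y‖ ^ p))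
              ≤ ENNReal.ofReal (Real.exp (-(lam * s)) * (c * L) *
                  (1 + ‖x‖ ^ p + ‖W (s - t) ω‖ ^ p)) := by
                apply ENNReal.ofReal_le_ofReal
                refine le_trans (mul_le_mul_of_nonneg_left hnorm
                  (by positivity : (0:ℝ) ≤ L * Real.exp (-(lam * s)))) (le_of_eq ?_)
                ring
            _ = ENNReal.ofReal (Real.exp (-(lam * s)) * (c * L)) *
                  (1 + ENNReal.ofReal (‖x‖ ^ p) + ENNReal.ofReal (‖W (s - t) ω‖ ^ p)) := by
                rw [ENNReal.ofReal_mul (by positivity)]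
                congr 1
                rw [ENNReal.ofReal_add (by positivity) (Real.rpow_nonneg (norm_nonneg _) _),
                  ENNReal.ofReal_add zero_le_one (Real.rpow_nonneg (norm_nonneg _) _),
                  ENNReal.ofReal_one]
  -- Step 2: integrate the pointwise bound
  have step2 : (∫⁻ ω, (∫⁻ s in Set.Icc t T,
      ENNReal.ofReal |f s (x + W (s - t) ω) (u s (x + W (s - t) ω))
        - f s (x + W (s - t) ω) (v s (x + W (s - t) ω))|) ∂P)
      ≤ ∫⁻ ω, (∫⁻ s in Set.Icc t T, g s ω) ∂P :=
    lintegral_mono fun ω => setLIntegral_mono (hgs_meas ω) fun s hs => step1 s hs ω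
  -- Step 3: Tonelli
  have hWun : Measurable (Function.uncurry W) :=
    measurable_uncurry_of_continuous_of_measurable hW.2.1 hW.2.2.1
  have hjoint : Measurable (Function.uncurry fun (ω : Ω) (s : ℝ) => g s ω) := by
    have hWq : Measurable fun q : Ω × ℝ => W (q.2 - t) q.1 :=
      hWun.comp ((measurable_snd.sub measurable_const).prodMk measurable_fst)
    apply Measurable.mul
    · exact hexp_meas.comp measurable_snd
    · apply Measurable.mul _ measurable_const
      apply Measurable.const_add
      exact ENNReal.measurable_ofReal.comp
        ((Real.continuous_rpow_const hp).measurable.comp hWq.norm)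
  have step3 : (∫⁻ ω, (∫⁻ s in Set.Icc t T, g s ω) ∂P)
      = ∫⁻ s in Set.Icc t T, (∫⁻ ω, g s ω ∂P) :=
    lintegral_lintegral_swap hjoint.aemeasurable
  -- Step 4: bound the inner integral
  have hITT : ∀ s ∈ Set.Icc t T, (∫⁻ ω, ENNReal.ofReal (‖W (s - t) ω‖ ^ p) ∂P) ≤ B := by
    intro s hs
    rw [hB]
    exact aux_moment_mono hW p hp (s - t) (sub_nonneg.2 hs.1) (by linarith [ht.1, hs.2])
  have step4 : ∀ s ∈ Set.Icc t T,
      (∫⁻ ω, g s ω ∂P) ≤ ENNReal.ofReal (Real.exp (-(lam * s))) *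
        (ENNReal.ofReal (c * L) * (A * M)) := by
    intro s hs
    have hmeasb : Measurable fun ω =>
        (1 + ENNReal.ofReal (‖x‖ ^ p) + ENNReal.ofReal (‖W (s - t) ω‖ ^ p)) :=
      measurable_const.add (hWnorm_meas (s - t))
    rw [hg]
    simp only
    rw [lintegral_const_mul _ (hmeasb.mul_const M),
      lintegral_mul_const _ hmeasb,
      lintegral_add_left measurable_const, lintegral_const, measure_univ, mul_one,
      ENNReal.ofReal_mul (Real.exp_pos _).le, mul_assoc]
    refine mul_le_mul_right (mul_le_mul_right (mul_le_mul_left ?_ M) _) _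
    rw [hA]
    exact add_le_add_right (hITT s hs) _
  -- Step 5: integrate in time
  have step5 : (∫⁻ s in Set.Icc t T, (∫⁻ ω, g s ω ∂P))
      ≤ ENNReal.ofReal (Real.exp (-(lam * t)) / lam) *
          (ENNReal.ofReal (c * L) * (A * M)) := by
    refine le_trans (setLIntegral_mono ((ENNReal.measurable_ofReal.comp
      ((Real.continuous_exp.comp (continuous_const.mul continuous_id).neg).measurable)).mul_const
        _) step4) ?_
    rw [lintegral_mul_const _ (ENNReal.measurable_ofReal.comp
      ((Real.continuous_exp.comp (continuous_const.mul continuous_id).neg).measurable))]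
    exact mul_le_mul_left (aux_exp_integral t T lam ht.2 hlam) _
  -- assemble
  calc ENNReal.ofReal (Real.exp (lam * t)) *
      ∫⁻ ω, (∫⁻ s in Set.Icc t T,
        ENNReal.ofReal |f s (x + W (s - t) ω) (u s (x + W (s - t) ω))
          - f s (x + W (s - t) ω) (v s (x + W (s - t) ω))|) ∂P
      ≤ ENNReal.ofReal (Real.exp (lam * t)) *
          (ENNReal.ofReal (Real.exp (-(lam * t)) / lam) *
            (ENNReal.ofReal (c * L) * (A * M))) :=
        mul_le_mul_right ((step2.trans (le_of_eq step3)).trans step5) _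
    _ = ENNReal.ofReal (c * L) * A / ENNReal.ofReal lam * M := by
        rw [← mul_assoc, ← ENNReal.ofReal_mul (Real.exp_pos _).le]
        have hexp1 : Real.exp (lam * t) * (Real.exp (-(lam * t)) / lam) = 1 / lam := by
          rw [Real.exp_neg]
          field_simp
        rw [hexp1, one_div, ENNReal.ofReal_inv_of_pos hlam, div_eq_mul_inv]
        ring
end
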